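/- Let 1 < α ≤ 2, c_α = max{(α-1)/α, sqrt((2-α)/α)}, and t_α = (1/(α c_α))^{1/(α-1)}. Then for all x with 0 ≤ x ≤ t_α, we have 1 - x + c_α x^α > 0. -/

import Mathlib

/-- Crux inequality: `((α-1)/α)^(α-1) < α * c`. -/
lemma psi_crux (α c : ℝ) (h1 : 1 < α) (h2 : α ≤ 2)
    (hc : c = max ((α - 1) / α) (Real.sqrt ((2 - α) / α))) :
    ((α - 1) / α) ^ (α - 1) < α * c := by
  have hα0 : 0 < α := by linarith
  set u : ℝ := α - 1 with hu_def
  have hu0 : 0 < u := by simp [hu_def]; linarith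
  have hu1 : u ≤ 1 := by simp [hu_def]; linarith
  set s : ℝ := (α - 1) / α with hs_def
  have hs0 : 0 < s := by positivity
  have hs2 : s ≤ 1 / 2 := by
    rw [hs_def, div_le_div_iff₀ hα0 (by norm_num)]; linarith
  set L : ℝ := -Real.log s with hL_def
  have hlogs : Real.log s ≤ -Real.log 2 := by
    calc Real.log s ≤ Real.log (1/2) := Real.log_le_log hs0 hs2
    _ = -Real.log 2 := by rw [one_div, Real.log_inv]
  have hlog2 : (0.6931471803 : ℝ) < Real.log 2 := Real.log_two_gt_d9
  have hL : Real.log 2 ≤ L := by rw [hL_def]; linarith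
  have hL0 : 0 < L := by linarith
  have hden : (0:ℝ) < 1 + u * L := by positivity
  -- step 1 : s ^ u ≤ (1 + u*L)⁻¹
  have hstep1 : s ^ u ≤ (1 + u * L)⁻¹ := by
    rw [Real.rpow_def_of_pos hs0]
    have hexp : 1 + u * L ≤ Real.exp (u * L) := by
      have := Real.add_one_le_exp (u * L); linarith
    have h1' : Real.exp (Real.log s * u) = (Real.exp (u * L))⁻¹ := by
      rw [← Real.exp_neg, hL_def]; ring_nf
    rw [h1']
    exact inv_anti₀ hden hexp
  rcases le_or_gt (0.69 : ℝ) u with hcase | hcase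
  · -- use the (α-1)/α branch :  α*c ≥ u
    have hαc : u ≤ α * c := by
      have : (α - 1) / α ≤ c := hc ▸ le_max_left _ _
      calc u = α * ((α - 1) / α) := by field_simp; exact hu_def
      _ ≤ α * c := by nlinarith
    have h2' : (1 + u * L)⁻¹ < u := by
      rw [inv_eq_one_div, div_lt_iff₀ hden]
      nlinarith [mul_le_mul (le_refl u) hL (Real.log_nonneg (by norm_num)) hu0.le,
        sq_nonneg (u - 0.69)]
    exact lt_of_le_of_lt hstep1 (lt_of_lt_of_le h2' hαc)
  · -- use the sqrt branch
    have hsq : α * Real.sqrt ((2 - α) / α) = Real.sqrt (α * (2 - α)) := by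
      have : α * (2 - α) = α ^ 2 * ((2 - α) / α) := by field_simp
      rw [this, Real.sqrt_mul (sq_nonneg α), Real.sqrt_sq hα0.le]
    have hαc : Real.sqrt (α * (2 - α)) ≤ α * c := by
      rw [← hsq]
      have : Real.sqrt ((2 - α) / α) ≤ c := hc ▸ le_max_right _ _
      nlinarith [Real.sqrt_nonneg ((2 - α) / α)]
    have huu : α * (2 - α) = 1 - u ^ 2 := by rw [hu_def]; ring
    have h2' : (1 + u * L)⁻¹ < Real.sqrt (α * (2 - α)) := by
      have h1mu : (0.5239 : ℝ) < 1 - u ^ 2 := by nlinarith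
      have hL2 : u < 2 * L * (1 - u ^ 2) := by
        nlinarith [mul_lt_mul'' (show (0.6931 : ℝ) < L by linarith) h1mu
          (by norm_num : (0:ℝ) ≤ 0.6931) (by norm_num : (0:ℝ) ≤ 0.5239)]
      have key : ((1 + u * L)⁻¹) ^ 2 < α * (2 - α) := by
        rw [huu, inv_pow, inv_eq_one_div, div_lt_iff₀ (by positivity)]
        nlinarith [mul_pos hu0 (show (0:ℝ) < 2 * L * (1 - u ^ 2) - u by linarith),
          mul_nonneg (sq_nonneg (u * L)) (by linarith : (0:ℝ) ≤ 1 - u ^ 2)]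
      exact (Real.lt_sqrt (by positivity)).mpr key
    exact lt_of_le_of_lt hstep1 (lt_of_lt_of_le h2' hαc)

theorem psi_arg_pos (α : ℝ) (h1 : 1 < α) (h2 : α ≤ 2)
    (c : ℝ) (hc : c = max ((α - 1) / α) (Real.sqrt ((2 - α) / α)))
    (t : ℝ) (ht : t = (1 / (α * c)) ^ (1 / (α - 1)))
    (x : ℝ) (hx0 : 0 ≤ x) (hxt : x ≤ t) :
    0 < 1 - x + c * x ^ α := by
  have hα0 : 0 < α := by linarith
  have hu0 : 0 < α - 1 := by linarith
  have hc0 : 0 < c := by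
    rw [hc]
    exact lt_of_lt_of_le (by positivity : (0:ℝ) < (α - 1)/α) (le_max_left _ _)
  have hαc : 0 < α * c := by positivity
  have ht0 : 0 < t := by rw [ht]; positivity
  -- t ^ (α - 1) = 1 / (α * c)
  have htpow : t ^ (α - 1) = 1 / (α * c) := by
    rw [ht]
    rw [← Real.rpow_mul (by positivity), one_div_mul_cancel (ne_of_gt hu0), Real.rpow_one]
  -- crux : t < α / (α - 1)
  have hcrux := psi_crux α c h1 h2 hc
  have hkey : ((α - 1) / α) * t < 1 := by
    have hs0 : (0:ℝ) < (α - 1) / α := by positivity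
    have hspos : (0:ℝ) < ((α - 1) / α) ^ (α - 1) := Real.rpow_pos_of_pos hs0 _
    have hinv : 1 / (α * c) < (((α - 1) / α)⁻¹) ^ (α - 1) := by
      rw [Real.inv_rpow hs0.le, one_div]
      exact inv_strictAnti₀ hspos hcrux
    have htlt : t < ((α - 1) / α)⁻¹ := by
      calc t = (1 / (α * c)) ^ (1 / (α - 1)) := ht
      _ < ((((α - 1) / α)⁻¹) ^ (α - 1)) ^ (1 / (α - 1)) :=
          Real.rpow_lt_rpow (by positivity) hinv (by positivity)
      _ = ((α - 1) / α)⁻¹ := by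
          rw [← Real.rpow_mul (by positivity), mul_one_div_cancel (ne_of_gt hu0), Real.rpow_one]
    calc ((α - 1) / α) * t < ((α - 1) / α) * ((α - 1) / α)⁻¹ := by
          exact mul_lt_mul_of_pos_left htlt hs0
    _ = 1 := mul_inv_cancel₀ (ne_of_gt hs0)
  -- Young / AM-GM : x ≤ c * x^α + ((α-1)/α) * t
  have hamgm : x ≤ c * x ^ α + ((α - 1) / α) * t := by
    have hw : 1 / α + (α - 1) / α = 1 := by field_simp; ring
    have hG := Real.geom_mean_le_arith_mean2_weighted (by positivity : (0:ℝ) ≤ 1/α)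
      (by positivity : (0:ℝ) ≤ (α-1)/α)
      (by positivity : (0:ℝ) ≤ α * c * x ^ α) ht0.le hw
    have hxα : (0:ℝ) ≤ x ^ α := Real.rpow_nonneg hx0 _
    have hL : (α * c * x ^ α) ^ (1/α) * t ^ ((α - 1)/α) = x := by
      have e1 : (α * c * x ^ α) ^ (1/α) = (α * c) ^ (1/α) * x := by
        rw [Real.mul_rpow hαc.le hxα, ← Real.rpow_mul hx0,
          mul_one_div_cancel (ne_of_gt hα0), Real.rpow_one]
      have e2 : t ^ ((α - 1)/α) = ((α * c) ^ (1/α))⁻¹ := by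
        have : (α - 1)/α = (α - 1) * (1/α) := by ring
        rw [this, Real.rpow_mul ht0.le, htpow, one_div]
        exact Real.inv_rpow hαc.le _
      rw [e1, e2]
      have hne : (α * c) ^ (1/α) ≠ 0 := ne_of_gt (Real.rpow_pos_of_pos hαc _)
      field_simp
    have hR : 1/α * (α * c * x ^ α) + (α - 1)/α * t = c * x ^ α + ((α - 1)/α) * t := by
      field_simp
    rw [hL, hR] at hG
    exact hG
  linarith
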